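/- Let 0 < η < 1, m ∈ ℕ, 0 ≤ j ≤ m, and 0 < γ ≤ c₀^{-2/η} with γ < 1/2, where c₀ ≥ 1. Suppose S ⊆ D₁ ⊂ ℝ^m is such that for every β ∈ ℕ, S can be covered by at most β^Q · c₀ (c₀ γ^{-m})^Q (c₀ γ^{-j})^{β - Q} balls of radius γ^β (for a fixed Q ∈ ℕ). Then for all 0 < r < 1, Vol(T_r(S) ∩ D₁) ≤ C(m, Q, η, γ) r^{m-j-η}. -/

import Mathlib

open Metric MeasureTheory
open scoped ENNReal

/-- Let `0 < η < 1`, `0 ≤ j ≤ m`, `c₀ ≥ 1` and `0 < γ ≤ c₀^{-2/η}` with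
`γ < 1/2`. If `S ⊆ D₁ ⊂ ℝ^m` can, for every `β ∈ ℕ`, be covered by at most
`β^Q c₀ (c₀ γ^{-m})^Q (c₀ γ^{-j})^{β-Q}` balls of radius `γ^β`, then
`Vol(T_r(S) ∩ D₁) ≤ C(m,Q,η,γ) r^{m-j-η}` for all `0 < r < 1`. -/
theorem stmt8 (m j Q : ℕ) (η γ c₀ : ℝ) (hη0 : 0 < η) (hη1 : η < 1) (hjm : j ≤ m)
    (hc₀ : 1 ≤ c₀) (hγ0 : 0 < γ) (hγc : γ ≤ c₀ ^ (-2 / η)) (hγhalf : γ < 1/2)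
    (S : Set (EuclideanSpace ℝ (Fin m)))
    (hS : S ⊆ ball (0 : EuclideanSpace ℝ (Fin m)) 1)
    (hcover : ∀ β : ℕ, ∃ t : Finset (EuclideanSpace ℝ (Fin m)),
      (t.card : ℝ) ≤ (β : ℝ) ^ Q * c₀ * (c₀ * γ ^ (-(m : ℝ))) ^ Q *
          (c₀ * γ ^ (-(j : ℝ))) ^ ((β : ℝ) - (Q : ℝ)) ∧
      S ⊆ ⋃ y ∈ t, ball y (γ ^ β)) :
    ∃ C : ℝ, 0 < C ∧ ∀ r : ℝ, 0 < r → r < 1 →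
      volume (thickening r S ∩ ball (0 : EuclideanSpace ℝ (Fin m)) 1) ≤
        ENNReal.ofReal (C * r ^ ((m : ℝ) - (j : ℝ) - η)) := by
  have hγ1 : γ < 1 := by linarith
  set V : ℝ≥0∞ := volume (ball (0 : EuclideanSpace ℝ (Fin m)) 1) with hV
  have hVtop : V ≠ ⊤ := measure_ball_lt_top.ne
  set Vr : ℝ := V.toReal with hVr
  have hVrpos : 0 < Vr :=
    ENNReal.toReal_pos (measure_ball_pos _ _ one_pos).ne' hVtop
  by_cases hjm' : j = m
  · -- trivial case: exponent is -η ≤ 0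
    refine ⟨Vr + 1, by linarith, fun r hr0 hr1 => ?_⟩
    have h1 : (1:ℝ) ≤ r ^ ((m : ℝ) - (j : ℝ) - η) := by
      apply Real.one_le_rpow_of_pos_of_le_one_of_nonpos hr0 hr1.le
      rw [hjm']; linarith
    calc volume (thickening r S ∩ ball (0 : EuclideanSpace ℝ (Fin m)) 1)
        ≤ V := measure_mono Set.inter_subset_right
      _ = ENNReal.ofReal Vr := (ENNReal.ofReal_toReal hVtop).symm
      _ ≤ ENNReal.ofReal ((Vr + 1) * r ^ ((m : ℝ) - (j : ℝ) - η)) := by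
          apply ENNReal.ofReal_le_ofReal
          calc Vr ≤ Vr + 1 := by linarith
            _ = (Vr + 1) * 1 := (mul_one _).symm
            _ ≤ (Vr + 1) * r ^ ((m : ℝ) - (j : ℝ) - η) := by
                apply mul_le_mul_of_nonneg_left h1; linarith
  · -- main case: j < m
    have hjm2 : j < m := lt_of_le_of_ne hjm hjm'
    haveI : Nonempty (Fin m) := ⟨⟨0, Nat.pos_of_ne_zero (by omega)⟩⟩
    haveI : Nontrivial (EuclideanSpace ℝ (Fin m)) := inferInstance
    set d : ℝ := (m : ℝ) - (j : ℝ) - η with hd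
    have hd0 : 0 < d := by
      have h1 : ((j:ℝ) + 1) ≤ (m:ℝ) := by exact_mod_cast Nat.succ_le_of_lt hjm2
      simp only [hd]; linarith
    have hc₀0 : 0 < c₀ := lt_of_lt_of_le one_pos hc₀
    -- c₀ ≤ γ ^ (-(η/2))
    have hcγ : c₀ ≤ γ ^ (-(η/2)) := by
      have h1 : (c₀ ^ (-2/η)) ^ (-(η/2)) ≤ γ ^ (-(η/2)) :=
        Real.rpow_le_rpow_of_nonpos hγ0 hγc (by linarith [hη0])
      have h2 : (c₀ ^ (-2/η)) ^ (-(η/2)) = c₀ := by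
        rw [← Real.rpow_mul hc₀0.le]
        have : (-2/η) * (-(η/2)) = 1 := by field_simp
        rw [this, Real.rpow_one]
      linarith [h1, h2.symm.le]
    -- K bound for β^Q * (γ^(η/2))^β
    set a : ℝ := γ ^ (η/2) with ha
    have ha0 : 0 ≤ a := Real.rpow_nonneg hγ0.le _
    have ha1 : a < 1 := Real.rpow_lt_one hγ0.le hγ1 (by linarith)
    obtain ⟨K, hK⟩ := (tendsto_pow_const_mul_const_pow_of_lt_one Q ha0 ha1).bddAbove_range
    have hKn : ∀ n : ℕ, (n:ℝ)^Q * a^n ≤ K := fun n => hK ⟨n, rfl⟩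
    set K' : ℝ := max K 1 with hK'
    have hK'1 : (1:ℝ) ≤ K' := le_max_right _ _
    have hKn' : ∀ n : ℕ, (n:ℝ)^Q * a^n ≤ K' := fun n => (hKn n).trans (le_max_left _ _)
    set A : ℝ := γ ^ (((j:ℝ) - m) * Q - η/2) with hA
    have hApos : 0 < A := Real.rpow_pos_of_pos hγ0 _
    set C : ℝ := K' * A * 2^m * Vr * γ ^ (-d) with hC
    have hCpos : 0 < C := by
      have := Real.rpow_pos_of_pos hγ0 (-d); positivity
    refine ⟨C, hCpos, fun r hr0 hr1 => ?_⟩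
    -- choose β with γ^(β+1) ≤ r < γ^β
    have hex : ∃ n : ℕ, γ ^ (n+1) ≤ r := by
      obtain ⟨n, hn⟩ := exists_pow_lt_of_lt_one hr0 hγ1
      refine ⟨n, le_of_lt (lt_of_le_of_lt ?_ hn)⟩
      exact pow_le_pow_of_le_one hγ0.le hγ1.le (Nat.le_succ n)
    set β := Nat.find hex with hβ
    have hβ1 : γ ^ (β+1) ≤ r := Nat.find_spec hex
    have hβ2 : r < γ ^ β := by
      rcases Nat.eq_zero_or_pos β with h0 | hpos
      · rw [h0]; simpa using hr1
      · have hmin := Nat.find_min hex (show β - 1 < β from Nat.sub_lt hpos one_pos)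
        rw [Nat.sub_add_cancel hpos] at hmin
        exact lt_of_not_ge hmin
    obtain ⟨t, htcard, htcover⟩ := hcover β
    set b : ℝ := (β : ℝ) with hb
    -- covering of the thickening
    have hsub : thickening r S ∩ ball (0 : EuclideanSpace ℝ (Fin m)) 1 ⊆
        ⋃ y ∈ t, ball y (2 * γ ^ β) := by
      rintro x ⟨hx, -⟩
      obtain ⟨z, hzS, hz⟩ := mem_thickening_iff.mp hx
      obtain ⟨y, hy, hzy⟩ := by simpa using htcover hzS
      refine Set.mem_biUnion hy ?_
      rw [mem_ball]
      have ht := dist_triangle x z y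
      linarith [hβ2]
    -- measure bound
    have hmeas : volume (thickening r S ∩ ball (0 : EuclideanSpace ℝ (Fin m)) 1) ≤
        (t.card : ℝ≥0∞) * (ENNReal.ofReal ((2 * γ ^ β) ^ m) * V) := by
      calc volume (thickening r S ∩ ball (0 : EuclideanSpace ℝ (Fin m)) 1)
          ≤ volume (⋃ y ∈ t, ball y (2 * γ ^ β)) := measure_mono hsub
        _ ≤ ∑ y ∈ t, volume (ball y (2 * γ ^ β)) := measure_biUnion_finset_le t _
        _ = ∑ y ∈ t, ENNReal.ofReal ((2 * γ ^ β) ^ m) * V := by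
            apply Finset.sum_congr rfl
            intro y _
            rw [hV, Measure.addHaar_ball volume y (by positivity), finrank_euclideanSpace_fin]
        _ = (t.card : ℝ≥0∞) * (ENNReal.ofReal ((2 * γ ^ β) ^ m) * V) := by
            rw [Finset.sum_const, nsmul_eq_mul]
    -- now the real-number inequality
    have hreal : (t.card : ℝ) * ((2 * γ ^ β) ^ m * Vr) ≤ C * r ^ d := by
      -- rewrite N
      set N : ℝ := (β : ℝ) ^ Q * c₀ * (c₀ * γ ^ (-(m : ℝ))) ^ Q *
          (c₀ * γ ^ (-(j : ℝ))) ^ (b - (Q : ℝ)) with hN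
      have hγβ : (γ : ℝ) ^ β = γ ^ (b : ℝ) := (Real.rpow_natCast γ β).symm
      have hNle : N ≤ K' * A * γ ^ (-(b * ((j:ℝ) + η))) := by
        have e1 : N = (β:ℝ)^Q * (c₀ ^ (b + 1)) * γ ^ (-(m:ℝ)*Q - (j:ℝ)*(b - Q)) := by
          rw [hN, mul_pow, Real.mul_rpow hc₀0.le (Real.rpow_nonneg hγ0.le _),
            ← Real.rpow_natCast (γ ^ (-(m:ℝ))) Q, ← Real.rpow_mul hγ0.le,
            ← Real.rpow_mul hγ0.le, ← Real.rpow_natCast c₀ Q]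
          rw [show b + 1 = 1 + (Q:ℝ) + (b - (Q:ℝ)) by ring, Real.rpow_add hc₀0,
            Real.rpow_add hc₀0, Real.rpow_one,
            show -(m:ℝ)*(Q:ℝ) - (j:ℝ)*(b-(Q:ℝ)) = (-(m:ℝ)*(Q:ℝ)) + (-(j:ℝ)*(b-(Q:ℝ))) by ring,
            Real.rpow_add hγ0]
          ring
        have e2 : c₀ ^ (b + 1) ≤ γ ^ (-(η/2) * (b+1)) := by
          calc c₀ ^ (b+1) ≤ (γ ^ (-(η/2))) ^ (b+1) := by
                apply Real.rpow_le_rpow hc₀0.le hcγ; positivity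
            _ = γ ^ (-(η/2) * (b+1)) := (Real.rpow_mul hγ0.le _ _).symm
        have e3 : N ≤ (β:ℝ)^Q * γ ^ (-(η/2)*(b+1) + (-(m:ℝ)*Q - (j:ℝ)*(b - Q))) := by
          rw [e1, Real.rpow_add hγ0]
          have hb0 : (0:ℝ) ≤ (β:ℝ)^Q := by positivity
          have := mul_le_mul_of_nonneg_right e2 (Real.rpow_nonneg hγ0.le (-(m:ℝ)*Q - (j:ℝ)*(b - Q)))
          calc (β:ℝ)^Q * c₀ ^ (b+1) * γ ^ (-(m:ℝ)*Q - (j:ℝ)*(b - Q))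
              = (β:ℝ)^Q * (c₀ ^ (b+1) * γ ^ (-(m:ℝ)*Q - (j:ℝ)*(b - Q))) := by ring
            _ ≤ (β:ℝ)^Q * (γ ^ (-(η/2)*(b+1)) * γ ^ (-(m:ℝ)*Q - (j:ℝ)*(b - Q))) := by
                apply mul_le_mul_of_nonneg_left this hb0
        have e4 : (β:ℝ)^Q * γ ^ (-(η/2)*(b+1) + (-(m:ℝ)*Q - (j:ℝ)*(b - Q)))
            = ((β:ℝ)^Q * a^β) * γ ^ ((((j:ℝ) - m) * Q - η/2) + -(b * ((j:ℝ) + η))) := by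
          rw [ha, ← Real.rpow_natCast (γ ^ (η/2)) β, ← Real.rpow_mul hγ0.le]
          rw [mul_assoc, ← Real.rpow_add hγ0]
          congr 1
          congr 1
          rw [hb]; ring
        have e5 : ((β:ℝ)^Q * a^β) * γ ^ ((((j:ℝ) - m) * Q - η/2) + -(b * ((j:ℝ) + η)))
            ≤ K' * (A * γ ^ (-(b * ((j:ℝ) + η)))) := by
          rw [hA, ← Real.rpow_add hγ0]
          exact mul_le_mul_of_nonneg_right (hKn' β) (Real.rpow_nonneg hγ0.le _)
        calc N ≤ _ := e3
          _ = _ := e4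
          _ ≤ K' * (A * γ ^ (-(b * ((j:ℝ) + η)))) := e5
          _ = K' * A * γ ^ (-(b * ((j:ℝ) + η))) := by ring
      -- assemble
      have h2m : (2 * γ ^ β) ^ m = 2^m * γ ^ (b * m) := by
        rw [mul_pow, ← pow_mul, ← Real.rpow_natCast γ (β * m)]
        push_cast
        ring_nf
        rw [hb, mul_comm (m:ℝ)]
      have hrd : γ ^ (b * d) ≤ r ^ d * γ ^ (-d) := by
        have h1 : γ ^ ((b+1) * d) ≤ r ^ d := by
          have : (γ ^ (β+1) : ℝ) = γ ^ ((b+1) : ℝ) := by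
            rw [← Real.rpow_natCast γ (β+1)]; push_cast; ring_nf
            rw [hb]
          calc γ ^ ((b+1) * d) = (γ ^ ((b+1):ℝ)) ^ d := Real.rpow_mul hγ0.le _ _
            _ ≤ r ^ d := by
                apply Real.rpow_le_rpow (Real.rpow_nonneg hγ0.le _) _ hd0.le
                rw [← this]; exact hβ1
        calc γ ^ (b * d) = γ ^ ((b+1) * d) * γ ^ (-d) := by
              rw [← Real.rpow_add hγ0]; congr 1; ring
          _ ≤ r ^ d * γ ^ (-d) := by
              apply mul_le_mul_of_nonneg_right h1 (Real.rpow_nonneg hγ0.le _)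
      have hcard : (t.card : ℝ) ≤ N := htcard
      have hNnn : (0:ℝ) ≤ K' * A * γ ^ (-(b * ((j:ℝ) + η))) := by positivity
      calc (t.card : ℝ) * ((2 * γ ^ β) ^ m * Vr)
          ≤ (K' * A * γ ^ (-(b * ((j:ℝ) + η)))) * ((2 * γ ^ β) ^ m * Vr) := by
            apply mul_le_mul_of_nonneg_right (hcard.trans hNle)
            have : (0:ℝ) ≤ (2 * γ ^ β) ^ m := by positivity
            positivity
        _ = K' * A * 2^m * Vr * (γ ^ (-(b * ((j:ℝ) + η))) * γ ^ (b * m)) := by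
            rw [h2m]; ring
        _ = K' * A * 2^m * Vr * γ ^ (b * d) := by
            rw [← Real.rpow_add hγ0]; congr 2; rw [hd]; ring
        _ ≤ K' * A * 2^m * Vr * (r ^ d * γ ^ (-d)) := by
            apply mul_le_mul_of_nonneg_left hrd; positivity
        _ = C * r ^ d := by rw [hC]; ring
    -- conclude
    calc volume (thickening r S ∩ ball (0 : EuclideanSpace ℝ (Fin m)) 1)
        ≤ (t.card : ℝ≥0∞) * (ENNReal.ofReal ((2 * γ ^ β) ^ m) * V) := hmeas
      _ = ENNReal.ofReal ((t.card : ℝ) * ((2 * γ ^ β) ^ m * Vr)) := by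
          rw [ENNReal.ofReal_mul (by positivity), ENNReal.ofReal_mul (by positivity),
            ENNReal.ofReal_natCast, ENNReal.ofReal_toReal hVtop]
      _ ≤ ENNReal.ofReal (C * r ^ d) := ENNReal.ofReal_le_ofReal hreal
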